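/- arXiv:2004.08871 — 2 statements merged into one kernel-verified Lean document; each statement's English description precedes it below -/
import Mathlib

section
/- Let (a_{αβ}) be a symmetric positive definite 2×2 matrix with inverse (a^{αβ}), and let λ ≥ 0, μ > 0. Define c^{αβστ} = (2λμ/(λ + 2μ)) a^{αβ} a^{στ} + μ(a^{ασ} a^{βτ} + a^{ατ} a^{βσ}). Then there exist constants c, C > 0 such that c|M|² ≤ c^{αβστ} M_{αβ} M_{στ} ≤ C|M|² for every symmetric M ∈ ℝ^{2×2}. -/
set_option maxHeartbeats 1000000 in
lemma keylow' (p q r x y z : ℝ) (hp : 0 < p) (hr : 0 < r) (hd : 0 < p*r - q^2) :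
    (p*r - q^2)^2 * (x^2 + 2*y^2 + z^2) ≤
    (p+r)^2 * ((p*x + 2*q*y + r*z)^2 - 2*(p*r-q^2)*(x*z - y^2)) := by
  have hs : (0:ℝ) < p + r := by positivity
  have h2 : (p*r-q^2) * (x^2 + 2*y^2 + z^2) ≤
      (p+r) * (p*(x^2+y^2) + 2*q*y*(x+z) + r*(y^2+z^2)) := by
    nlinarith [sq_nonneg (p*x+q*y), sq_nonneg (q*x+r*y), sq_nonneg (r*z+q*y), sq_nonneg (q*z+p*y)]
  have h1 : (p*r-q^2) * (p*(x^2+y^2) + 2*q*y*(x+z) + r*(y^2+z^2)) ≤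
      (p+r) * ((p*x + 2*q*y + r*z)^2 - 2*(p*r-q^2)*(x*z - y^2)) := by
    have hQ11 : (0:ℝ) < p*(p^2+q^2) := by positivity
    have hc1 : (0:ℝ) < (p*r-q^2)*(p^4+q^4+p^3*r+p^2*q^2) := by positivity
    have key : (p*(p^2+q^2)) * ((p*r-q^2)*(p^4+q^4+p^3*r+p^2*q^2)) *
        ((p+r) * ((p*x + 2*q*y + r*z)^2 - 2*(p*r-q^2)*(x*z - y^2))
          - (p*r-q^2) * (p*(x^2+y^2) + 2*q*y*(x+z) + r*(y^2+z^2)))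
        = ((p*r-q^2)*(p^4+q^4+p^3*r+p^2*q^2)) * (p*(p^2+q^2)*x + (q^3+p*q*r+2*p^2*q)*y + q^2*(p+r)*z)^2
          + (((p*r-q^2)*(p^4+q^4+p^3*r+p^2*q^2))*y + (p*(p^2+q^2)*(q*(2*r^2+q^2+p*r)) - (q^3+p*q*r+2*p^2*q)*(q^2*(p+r)))*z)^2
          + p*(p^2+q^2)*(p*r-q^2)^4*(p+r)*z^2 := by
      ring
    have hsum : (0:ℝ) ≤ (p*(p^2+q^2)) * ((p*r-q^2)*(p^4+q^4+p^3*r+p^2*q^2)) *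
        ((p+r) * ((p*x + 2*q*y + r*z)^2 - 2*(p*r-q^2)*(x*z - y^2))
          - (p*r-q^2) * (p*(x^2+y^2) + 2*q*y*(x+z) + r*(y^2+z^2))) := by
      rw [key]
      have t1 : (0:ℝ) ≤ ((p*r-q^2)*(p^4+q^4+p^3*r+p^2*q^2)) * (p*(p^2+q^2)*x + (q^3+p*q*r+2*p^2*q)*y + q^2*(p+r)*z)^2 :=
        mul_nonneg hc1.le (sq_nonneg _)
      have t2 : (0:ℝ) ≤ (((p*r-q^2)*(p^4+q^4+p^3*r+p^2*q^2))*y + (p*(p^2+q^2)*(q*(2*r^2+q^2+p*r)) - (q^3+p*q*r+2*p^2*q)*(q^2*(p+r)))*z)^2 :=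
        sq_nonneg _
      have t3 : (0:ℝ) ≤ p*(p^2+q^2)*(p*r-q^2)^4*(p+r)*z^2 := by positivity
      linarith
    have hpos := mul_pos hQ11 hc1
    nlinarith [hsum, hpos]
  calc (p*r-q^2)^2 * (x^2+2*y^2+z^2)
      = (p*r-q^2) * ((p*r-q^2) * (x^2+2*y^2+z^2)) := by ring
    _ ≤ (p*r-q^2) * ((p+r) * (p*(x^2+y^2) + 2*q*y*(x+z) + r*(y^2+z^2))) :=
        mul_le_mul_of_nonneg_left h2 hd.le
    _ = (p+r) * ((p*r-q^2) * (p*(x^2+y^2) + 2*q*y*(x+z) + r*(y^2+z^2))) := by ring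
    _ ≤ (p+r) * ((p+r) * ((p*x + 2*q*y + r*z)^2 - 2*(p*r-q^2)*(x*z - y^2))) :=
        mul_le_mul_of_nonneg_left h1 hs.le
    _ = (p+r)^2 * ((p*x + 2*q*y + r*z)^2 - 2*(p*r-q^2)*(x*z - y^2)) := by ring

lemma keyhigh1' (p q r x y z : ℝ) :
    (p*x + 2*q*y + r*z)^2 ≤ (p^2 + 2*q^2 + r^2) * (x^2 + 2*y^2 + z^2) := by
  nlinarith [sq_nonneg (p*y - q*x), sq_nonneg (q*z - r*y), sq_nonneg (p*z - r*x)]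

set_option maxHeartbeats 1000000 in
/-- Ellipticity of the reduced plane-stress elasticity tensor
`c^{αβστ} = (2λμ/(λ+2μ)) a^{αβ} a^{στ} + μ(a^{ασ}a^{βτ} + a^{ατ}a^{βσ})`
built from the inverse `(a^{αβ})` of a symmetric positive definite 2×2
matrix `(a_{αβ})`: there exist `c, C > 0` such that
`c|M|² ≤ c^{αβστ} M_{αβ} M_{στ} ≤ C|M|²` for all symmetric `M ∈ ℝ^{2×2}`. -/
theorem stmt_8
    (a : Matrix (Fin 2) (Fin 2) ℝ) (ha : a.PosDef) (hsymm : a.IsSymm)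
    (lam mu : ℝ) (hlam : 0 ≤ lam) (hmu : 0 < mu)
    (A : Matrix (Fin 2) (Fin 2) ℝ) (hA : A = a⁻¹)
    (c4 : Fin 2 → Fin 2 → Fin 2 → Fin 2 → ℝ)
    (hc4 : ∀ α β σ τ, c4 α β σ τ =
      (2 * lam * mu / (lam + 2 * mu)) * A α β * A σ τ +
        mu * (A α σ * A β τ + A α τ * A β σ)) :
    ∃ c C : ℝ, 0 < c ∧ 0 < C ∧
      ∀ M : Matrix (Fin 2) (Fin 2) ℝ, M.IsSymm →
        c * (∑ α, ∑ β, M α β ^ 2) ≤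
            (∑ α, ∑ β, ∑ σ, ∑ τ, c4 α β σ τ * M α β * M σ τ) ∧
        (∑ α, ∑ β, ∑ σ, ∑ τ, c4 α β σ τ * M α β * M σ τ) ≤
            C * (∑ α, ∑ β, M α β ^ 2) := by
  have hA' : A.PosDef := by rw [hA]; exact ha.inv
  have hq : A 1 0 = A 0 1 := by
    have hAs : A.IsSymm := by
      rw [hA, Matrix.IsSymm, Matrix.transpose_nonsing_inv, hsymm.eq]
    exact hAs.apply 0 1
  set k := 2 * lam * mu / (lam + 2 * mu) with hkdef
  have hk : 0 ≤ k := by rw [hkdef]; positivity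
  set p := A 0 0 with hp'
  set q := A 0 1 with hq'
  set r := A 1 1 with hr'
  have hp : 0 < p := by
    have hne : (Pi.single 0 1 : Fin 2 → ℝ) ≠ 0 := fun h => by simpa using congrFun h 0
    have := hA'.dotProduct_mulVec_pos (x := Pi.single 0 1) hne
    simpa [Matrix.mulVec, dotProduct, Fin.sum_univ_two, Pi.single] using this
  have hr : 0 < r := by
    have hne : (Pi.single 1 1 : Fin 2 → ℝ) ≠ 0 := fun h => by simpa using congrFun h 1
    have := hA'.dotProduct_mulVec_pos (x := Pi.single 1 1) hne
    simpa [Matrix.mulVec, dotProduct, Fin.sum_univ_two, Pi.single] using this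
  have hd : 0 < p*r - q^2 := by
    have hdet := hA'.det_pos
    rw [Matrix.det_fin_two] at hdet
    rw [hq] at hdet
    nlinarith [hdet]
  have hs : (0:ℝ) < p + r := by positivity
  refine ⟨2*mu*(p*r-q^2)^2/(p+r)^2,
    (k + 2*mu) * (p^2+2*q^2+r^2) + 2*mu*(p*r-q^2) + 1, ?_, ?_, ?_⟩
  · exact div_pos (by positivity) (by positivity)
  · have h1 : (0:ℝ) ≤ (k + 2*mu) * (p^2+2*q^2+r^2) :=
      mul_nonneg (by linarith) (by positivity)
    have h2 : (0:ℝ) < 2*mu*(p*r-q^2) := by positivity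
    linarith
  intro M hM
  have hy : M 1 0 = M 0 1 := hM.apply 0 1
  set x := M 0 0 with hx'
  set y := M 0 1 with hy'
  set z := M 1 1 with hz'
  have hQ : (∑ α, ∑ β, ∑ σ, ∑ τ, c4 α β σ τ * M α β * M σ τ)
      = k * (p*x + 2*q*y + r*z)^2
        + 2*mu*((p*x + 2*q*y + r*z)^2 - 2*(p*r-q^2)*(x*z - y^2)) := by
    simp only [Fin.sum_univ_two, hc4, hq, hy]
    ring
  have hN : (∑ α, ∑ β, M α β ^ 2) = x^2 + 2*y^2 + z^2 := by
    simp only [Fin.sum_univ_two, hy]; ring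
  rw [hQ, hN]
  have hnn : (0:ℝ) ≤ x^2+2*y^2+z^2 := by positivity
  constructor
  · have h := keylow' p q r x y z hp hr hd
    rw [div_mul_eq_mul_div, div_le_iff₀ (by positivity : (0:ℝ) < (p+r)^2)]
    have hT2 : 2*mu*((p*r-q^2)^2 * (x^2+2*y^2+z^2)) ≤
        2*mu*((p+r)^2 * ((p*x + 2*q*y + r*z)^2 - 2*(p*r-q^2)*(x*z - y^2))) :=
      mul_le_mul_of_nonneg_left h (by linarith)
    have hks2 : 0 ≤ (k * (p*x + 2*q*y + r*z)^2) * (p+r)^2 :=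
      mul_nonneg (mul_nonneg hk (sq_nonneg _)) (sq_nonneg _)
    calc 2*mu*(p*r-q^2)^2 * (x^2+2*y^2+z^2)
        = 2*mu*((p*r-q^2)^2 * (x^2+2*y^2+z^2)) := by ring
      _ ≤ 2*mu*((p+r)^2 * ((p*x + 2*q*y + r*z)^2 - 2*(p*r-q^2)*(x*z - y^2))) := hT2
      _ ≤ (k * (p*x + 2*q*y + r*z)^2) * (p+r)^2
            + 2*mu*((p+r)^2 * ((p*x + 2*q*y + r*z)^2 - 2*(p*r-q^2)*(x*z - y^2))) := by
          linarith
      _ = (k * (p*x + 2*q*y + r*z)^2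
            + 2*mu*((p*x + 2*q*y + r*z)^2 - 2*(p*r-q^2)*(x*z - y^2))) * (p+r)^2 := by ring
  · have h1 := keyhigh1' p q r x y z
    have h2 : -(2*(p*r-q^2)*(x*z-y^2)) ≤ (p*r-q^2)*(x^2+2*y^2+z^2) := by
      nlinarith [mul_nonneg hd.le (sq_nonneg (x+z))]
    have u1 : k * (p*x + 2*q*y + r*z)^2 ≤ k * ((p^2+2*q^2+r^2)*(x^2+2*y^2+z^2)) :=
      mul_le_mul_of_nonneg_left h1 hk
    have u2 : 2*mu * (p*x + 2*q*y + r*z)^2 ≤ 2*mu * ((p^2+2*q^2+r^2)*(x^2+2*y^2+z^2)) :=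
      mul_le_mul_of_nonneg_left h1 (by linarith)
    have u3 : 2*mu * -(2*(p*r-q^2)*(x*z-y^2)) ≤ 2*mu * ((p*r-q^2)*(x^2+2*y^2+z^2)) :=
      mul_le_mul_of_nonneg_left h2 (by linarith)
    calc k * (p*x + 2*q*y + r*z)^2
          + 2*mu*((p*x + 2*q*y + r*z)^2 - 2*(p*r-q^2)*(x*z - y^2))
        = k * (p*x + 2*q*y + r*z)^2 + 2*mu * (p*x + 2*q*y + r*z)^2
            + 2*mu * -(2*(p*r-q^2)*(x*z-y^2)) := by ring
      _ ≤ k * ((p^2+2*q^2+r^2)*(x^2+2*y^2+z^2))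
            + 2*mu * ((p^2+2*q^2+r^2)*(x^2+2*y^2+z^2))
            + 2*mu * ((p*r-q^2)*(x^2+2*y^2+z^2)) := by linarith
      _ = ((k + 2*mu) * (p^2+2*q^2+r^2) + 2*mu*(p*r-q^2)) * (x^2+2*y^2+z^2) := by ring
      _ ≤ ((k + 2*mu) * (p^2+2*q^2+r^2) + 2*mu*(p*r-q^2) + 1) * (x^2+2*y^2+z^2) := by
          nlinarith [hnn]
end

section
/- Let E ⊂ ℝⁿ be a nonempty closed convex set and for t > 0 let B_t(E) = {x : dist(x, E) ≤ t}. Let τ(x) = dist(x, E). Then for x, y outside E, setting τ̄ = min{τ(x), τ(y)}, the gradients of τ (where they exist) satisfy |∇τ(x) − ∇τ(y)| ≤ (2/τ̄)|x − y|. -/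
open Metric InnerProductSpace

section Aux

variable {F : Type*} [NormedAddCommGroup F] [InnerProductSpace ℝ F] [CompleteSpace F]

local notation "⟪" a ", " b "⟫" => @inner ℝ _ _ a b

private lemma var_ineq {E : Set F} (hcv : Convex ℝ E) {x p : F} (hp : p ∈ E)
    (hd : infDist x E = dist x p) : ∀ z ∈ E, ⟪x - p, z - p⟫ ≤ 0 := by
  have : ‖x - p‖ = ⨅ w : E, ‖x - w‖ := by
    rw [← dist_eq_norm, ← hd, infDist_eq_iInf]
    simp_rw [dist_eq_norm]
  exact (norm_eq_iInf_iff_real_inner_le_zero hcv hp).mp this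

private lemma norm_add_le_aux (v h : F) :
    ‖v‖ * ‖v + h‖ ≤ ‖v‖ ^ 2 + ⟪v, h⟫ + ‖h‖ ^ 2 / 2 := by
  have h1 : ‖v‖ * ‖v + h‖ ≤ (‖v‖ ^ 2 + ‖v + h‖ ^ 2) / 2 := by
    nlinarith [sq_nonneg (‖v‖ - ‖v + h‖)]
  have h2 : ‖v + h‖ ^ 2 = ‖v‖ ^ 2 + 2 * ⟪v, h⟫ + ‖h‖ ^ 2 :=
    norm_add_sq_real v h
  linarith

private lemma grad_infDist {E : Set F} (hne : E.Nonempty) (hcv : Convex ℝ E) {x p : F}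
    (hp : p ∈ E) (hd : infDist x E = dist x p) (hx : x ∉ E) :
    HasGradientAt (fun z => infDist z E) ((‖x - p‖)⁻¹ • (x - p)) x := by
  set d := ‖x - p‖ with hdd
  have hd0 : 0 < d := by
    rw [hdd, norm_pos_iff, sub_ne_zero]
    rintro rfl; exact hx hp
  set u := d⁻¹ • (x - p) with hu
  have hun : ‖u‖ = 1 := by
    rw [hu, norm_smul, norm_inv, norm_norm, inv_mul_cancel₀ hd0.ne']
  have key : ∀ h : F, 0 ≤ infDist (x + h) E - d - ⟪u, h⟫ ∧
      infDist (x + h) E - d - ⟪u, h⟫ ≤ ‖h‖ ^ 2 / (2 * d) := by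
    intro h
    have h3 : ⟪x - p, h⟫ = d * ⟪u, h⟫ := by
      rw [hu, real_inner_smul_left]; field_simp
    constructor
    · have hzb : ∀ z ∈ E, d + ⟪u, h⟫ ≤ dist (x + h) z := by
        intro z hz
        have hCS : ⟪u, x + h - z⟫ ≤ dist (x + h) z := by
          calc ⟪u, x + h - z⟫ ≤ ‖u‖ * ‖x + h - z‖ := real_inner_le_norm _ _
            _ = dist (x + h) z := by rw [hun, one_mul, dist_eq_norm]
        have hdecomp : ⟪u, x + h - z⟫ = d + ⟪u, h⟫ + d⁻¹ * (- ⟪x - p, z - p⟫) := by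
          have he : x + h - z = (x - p) + h + (p - z) := by abel
          have hn : p - z = -(z - p) := by abel
          rw [he, inner_add_right, inner_add_right, hu]
          simp only [real_inner_smul_left]
          rw [real_inner_self_eq_norm_sq, hn, inner_neg_right]
          field_simp
          ring
        have hvi := var_ineq hcv hp hd z hz
        have hinv : 0 ≤ d⁻¹ * (- ⟪x - p, z - p⟫) :=
          mul_nonneg (inv_nonneg.mpr hd0.le) (by linarith)
        linarith
      have hle : d + ⟪u, h⟫ ≤ infDist (x + h) E := by
        rcases lt_or_ge (infDist (x + h) E) (d + ⟪u, h⟫) with hlt | hle'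
        · obtain ⟨z, hz, hzd⟩ := (infDist_lt_iff hne).mp hlt
          exact absurd hzd (not_lt.mpr (hzb z hz))
        · exact hle'
      linarith
    · have h1 : infDist (x + h) E ≤ ‖(x - p) + h‖ := by
        calc infDist (x + h) E ≤ dist (x + h) p := infDist_le_dist_of_mem hp
          _ = ‖(x - p) + h‖ := by rw [dist_eq_norm]; congr 1; abel
      have h2 := norm_add_le_aux (x - p) h
      rw [← hdd] at h2
      have h5 : d * infDist (x + h) E ≤ d ^ 2 + d * ⟪u, h⟫ + ‖h‖ ^ 2 / 2 := by
        nlinarith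
      rw [le_div_iff₀ (by positivity : (0:ℝ) < 2 * d)]
      linarith
  rw [hasGradientAt_iff_hasFDerivAt, hasFDerivAt_iff_isLittleO,
    Asymptotics.isLittleO_iff]
  intro c hc
  have hball : ∀ᶠ x' in nhds x, ‖x' - x‖ ≤ 2 * d * c := by
    have : Metric.ball x (2 * d * c) ∈ nhds x := Metric.ball_mem_nhds x (by positivity)
    filter_upwards [this] with x' hx'
    rw [Metric.mem_ball, dist_eq_norm] at hx'
    exact hx'.le
  have hfx : infDist x E = d := by rw [hd, dist_eq_norm]
  filter_upwards [hball] with x' hx'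
  have hk := key (x' - x)
  rw [add_sub_cancel] at hk
  have htd : (toDual ℝ F u) (x' - x) = ⟪u, x' - x⟫ := rfl
  rw [htd, hfx, Real.norm_eq_abs, abs_le]
  constructor
  · have := hk.1
    nlinarith [norm_nonneg (x' - x), hc.le]
  · have h2 := hk.2
    have : ‖x' - x‖ ^ 2 / (2 * d) ≤ c * ‖x' - x‖ := by
      rw [div_le_iff₀ (by positivity)]
      nlinarith [norm_nonneg (x' - x)]
    linarith

end Aux

set_option maxHeartbeats 1000000 in
/-- For the distance function `τ(x) = dist(x, E)` to a nonempty closed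
convex set `E ⊂ ℝⁿ`, the gradients at points `x, y ∉ E` (where they exist)
satisfy `|∇τ(x) - ∇τ(y)| ≤ (2/τ̄)|x - y|` with `τ̄ = min{τ(x), τ(y)}`. -/
theorem stmt_17 {n : ℕ}
    (E : Set (EuclideanSpace ℝ (Fin n))) (hne : E.Nonempty)
    (hcl : IsClosed E) (hcv : Convex ℝ E)
    (τ : EuclideanSpace ℝ (Fin n) → ℝ) (hτ : ∀ x, τ x = Metric.infDist x E)
    (x y : EuclideanSpace ℝ (Fin n)) (hx : x ∉ E) (hy : y ∉ E)
    (gx gy : EuclideanSpace ℝ (Fin n))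
    (hgx : HasGradientAt τ gx x) (hgy : HasGradientAt τ gy y) :
    ‖gx - gy‖ ≤ (2 / min (τ x) (τ y)) * ‖x - y‖ := by
  have hτf : τ = fun z => Metric.infDist z E := funext hτ
  subst hτf
  obtain ⟨p, hp, hdp⟩ := hcl.exists_infDist_eq_dist hne x
  obtain ⟨q, hq, hdq⟩ := hcl.exists_infDist_eq_dist hne y
  set a := ‖x - p‖ with ha
  set b := ‖y - q‖ with hb
  have ha0 : 0 < a := by
    rw [ha, norm_pos_iff, sub_ne_zero]; rintro rfl; exact hx hp
  have hb0 : 0 < b := by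
    rw [hb, norm_pos_iff, sub_ne_zero]; rintro rfl; exact hy hq
  have hgx' : gx = a⁻¹ • (x - p) := hgx.unique (grad_infDist hne hcv hp hdp hx)
  have hgy' : gy = b⁻¹ • (y - q) := hgy.unique (grad_infDist hne hcv hq hdq hy)
  -- projections are 1-Lipschitz
  have hpq : ‖p - q‖ ≤ ‖x - y‖ := by
    have h1 := var_ineq hcv hp hdp q hq
    have h2 := var_ineq hcv hq hdq p hp
    have hkey : ‖p - q‖ ^ 2 ≤ ⟪x - y, p - q⟫_ℝ := by
      have hdec : ⟪x - y, p - q⟫_ℝ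
          = ⟪p - q, p - q⟫_ℝ + (- ⟪x - p, q - p⟫_ℝ) + (- ⟪y - q, p - q⟫_ℝ) := by
        have he : x - y = (p - q) + (x - p) + (-(y - q)) := by abel
        have hpq' : p - q = -(q - p) := by abel
        rw [he, inner_add_left, inner_add_left, inner_neg_left, hpq', inner_neg_right,
          inner_neg_right]
      rw [hdec, real_inner_self_eq_norm_sq]
      linarith
    have hCS : ⟪x - y, p - q⟫_ℝ ≤ ‖x - y‖ * ‖p - q‖ := real_inner_le_norm _ _
    rcases eq_or_lt_of_le (norm_nonneg (p - q)) with h0 | h0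
    · rw [← h0]; exact norm_nonneg _
    · nlinarith
  have hτx : Metric.infDist x E = a := by rw [hdp, dist_eq_norm]
  have hτy : Metric.infDist y E = b := by rw [hdq, dist_eq_norm]
  simp only [hτx, hτy]
  set m := min a b with hm
  have hm0 : 0 < m := lt_min ha0 hb0
  have hma : m ≤ a := min_le_left _ _
  have hmb : m ≤ b := min_le_right _ _
  set u := x - p with hu
  set v := y - q with hv
  have huv : ‖u - v‖ ≤ 2 * ‖x - y‖ := by
    calc ‖u - v‖ = ‖(x - y) - (p - q)‖ := by rw [hu, hv]; congr 1; abel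
      _ ≤ ‖x - y‖ + ‖p - q‖ := norm_sub_le _ _
      _ ≤ 2 * ‖x - y‖ := by linarith
  have hgnorm : ‖gx - gy‖ ^ 2 = 2 - 2 * (a⁻¹ * b⁻¹) * ⟪u, v⟫_ℝ := by
    rw [norm_sub_sq_real, hgx', hgy']
    have h1 : ‖a⁻¹ • u‖ = 1 := by
      rw [norm_smul, norm_inv, Real.norm_eq_abs, abs_of_pos ha0, ← ha,
        inv_mul_cancel₀ ha0.ne']
    have h2 : ‖b⁻¹ • v‖ = 1 := by
      rw [norm_smul, norm_inv, Real.norm_eq_abs, abs_of_pos hb0, ← hb,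
        inv_mul_cancel₀ hb0.ne']
    rw [h1, h2, real_inner_smul_left, real_inner_smul_right]
    ring
  have huvsq : ‖u - v‖ ^ 2 = a ^ 2 + b ^ 2 - 2 * ⟪u, v⟫_ℝ := by
    rw [norm_sub_sq_real, ← ha, ← hb]; ring
  have hsq : (a * b) * ‖gx - gy‖ ^ 2 = ‖u - v‖ ^ 2 - (a - b) ^ 2 := by
    rw [hgnorm, huvsq]
    field_simp
    ring
  have hG0 : (0:ℝ) ≤ ‖gx - gy‖ := norm_nonneg _
  have hR0 : (0:ℝ) ≤ 2 / m * ‖x - y‖ := by positivity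
  have hab : m ^ 2 ≤ a * b := by nlinarith
  have hGsq : ‖gx - gy‖ ^ 2 ≤ (2 / m * ‖x - y‖) ^ 2 := by
    have h5 : (a * b) * ‖gx - gy‖ ^ 2 ≤ ‖u - v‖ ^ 2 := by
      rw [hsq]; nlinarith [sq_nonneg (a - b)]
    have h6 : ‖u - v‖ ^ 2 ≤ (2 * ‖x - y‖) ^ 2 := by
      nlinarith [norm_nonneg (u - v), norm_nonneg (x - y)]
    rw [div_mul_eq_mul_div, div_pow, le_div_iff₀ (by positivity)]
    calc ‖gx - gy‖ ^ 2 * m ^ 2 ≤ (a * b) * ‖gx - gy‖ ^ 2 := by nlinarith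
      _ ≤ (2 * ‖x - y‖) ^ 2 := le_trans h5 h6
      _ = (2 * ‖x - y‖) ^ 2 := rfl
  nlinarith
end
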